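/- Let a = 3k + j with k ≥ 1 and j ∈ {1, 2}, and let i ∈ {1, 2}. Suppose S = ⟨a, a+1, i·a+3⟩ is a numerical semigroup minimally generated by these three elements. Then a² − (k·(3−i) + 1)·a − 1 is a Pseudo-Frobenius number of S, i.e., it is not in S but adding any positive element of S to it yields an element of S. -/
import Mathlib

lemma key14 (a n e M : ℕ) (ha : 0 < a) (h : n * a + (e + 1) = M * a) :
    a ≤ e + 1 ∧ n < M := by
  have hd0 : a ∣ n * a + (e + 1) := by rw [h]; exact dvd_mul_left a M
  have hd : a ∣ e + 1 := (Nat.dvd_add_right (dvd_mul_left a n)).mp hd0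
  have he : a ≤ e + 1 := Nat.le_of_dvd (Nat.succ_pos e) hd
  have h2 : (n + 1) * a ≤ M * a := by
    have := Nat.add_le_add_left he (n * a)
    rw [h] at this
    nlinarith
  exact ⟨he, Nat.lt_of_mul_lt_mul_right (lt_of_lt_of_le (by nlinarith) h2)⟩

lemma closed14 (A B C x : ℕ)
    (h1 : ∃ m1 m2 m3 : ℕ, x + A = m1 * A + m2 * B + m3 * C)
    (h2 : ∃ m1 m2 m3 : ℕ, x + B = m1 * A + m2 * B + m3 * C)
    (h3 : ∃ m1 m2 m3 : ℕ, x + C = m1 * A + m2 * B + m3 * C) :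
    ∀ s : ℕ, (∃ l1 l2 l3 : ℕ, s = l1 * A + l2 * B + l3 * C) → 0 < s →
      ∃ l1 l2 l3 : ℕ, x + s = l1 * A + l2 * B + l3 * C := by
  rintro s ⟨l1, l2, l3, rfl⟩ hs
  rcases l1 with _ | l1
  · rcases l2 with _ | l2
    · rcases l3 with _ | l3
      · simp at hs
      · obtain ⟨m1, m2, m3, hm⟩ := h3
        exact ⟨m1, m2, m3 + l3, by linarith [hm]⟩
    · obtain ⟨m1, m2, m3, hm⟩ := h2
      exact ⟨m1, m2 + l2, m3 + l3, by linarith [hm]⟩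
  · obtain ⟨m1, m2, m3, hm⟩ := h1
    exact ⟨m1 + l1, m2 + l2, m3 + l3, by linarith [hm]⟩

theorem stmt_14 (k j i a : ℕ) (hk : 1 ≤ k) (hj : j = 1 ∨ j = 2)
    (hi : i = 1 ∨ i = 2) (hA : a = 3 * k + j)
    (hmin₁ : ¬ ∃ l₂ l₃ : ℕ, a = l₂ * (a + 1) + l₃ * (i * a + 3))
    (hmin₂ : ¬ ∃ l₁ l₃ : ℕ, a + 1 = l₁ * a + l₃ * (i * a + 3))
    (hmin₃ : ¬ ∃ l₁ l₂ : ℕ, i * a + 3 = l₁ * a + l₂ * (a + 1))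
    (x : ℕ) (hx : (x : ℤ) = (a : ℤ) ^ 2 - (k * (3 - i) + 1) * a - 1) :
    (¬ ∃ l₁ l₂ l₃ : ℕ, x = l₁ * a + l₂ * (a + 1) + l₃ * (i * a + 3)) ∧
    ∀ s : ℕ, (∃ l₁ l₂ l₃ : ℕ, s = l₁ * a + l₂ * (a + 1) + l₃ * (i * a + 3)) →
      0 < s → ∃ l₁ l₂ l₃ : ℕ, x + s = l₁ * a + l₂ * (a + 1) + l₃ * (i * a + 3) := by
  rcases hi with rfl | rfl <;> rcases hj with rfl | rfl <;> subst hA <;> push_cast at hx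
  -- Case i = 1, j = 1
  · have hx1 : x + 1 = k * (3 * k + 1) := by
      have h : (x : ℤ) + 1 = (k : ℤ) * (3 * (k : ℤ) + 1) := by linear_combination hx
      exact_mod_cast h
    constructor
    · rintro ⟨l1, l2, l3, hrep⟩
      have hne : (l1 + l2 + l3) * (3 * k + 1) + (l2 + 3 * l3 + 1) = k * (3 * k + 1) := by
        rw [← hx1, hrep]; ring
      obtain ⟨he, hn⟩ := key14 (3 * k + 1) _ _ k (by omega) hne
      omega
    · apply closed14
      · exact ⟨0, 0, k, by zify; linear_combination hx⟩
      · exact ⟨k + 1, 0, 0, by zify; linear_combination hx⟩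
      · exact ⟨k - 1, 2, 0, by
          obtain ⟨k', rfl⟩ : ∃ k', k = k' + 1 := ⟨k - 1, by omega⟩
          simp only [Nat.add_sub_cancel]
          zify
          push_cast at hx ⊢
          linear_combination hx⟩
  -- Case i = 1, j = 2
  · have hx1 : x + 1 = (k + 1) * (3 * k + 2) := by
      have h : (x : ℤ) + 1 = ((k : ℤ) + 1) * (3 * (k : ℤ) + 2) := by linear_combination hx
      exact_mod_cast h
    constructor
    · rintro ⟨l1, l2, l3, hrep⟩
      have hne : (l1 + l2 + l3) * (3 * k + 2) + (l2 + 3 * l3 + 1) = (k + 1) * (3 * k + 2) := by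
        rw [← hx1, hrep]; ring
      obtain ⟨he, hn⟩ := key14 (3 * k + 2) _ _ (k + 1) (by omega) hne
      omega
    · apply closed14
      · exact ⟨0, 1, k, by zify; linear_combination hx⟩
      · exact ⟨k + 2, 0, 0, by zify; linear_combination hx⟩
      · exact ⟨k, 2, 0, by zify; linear_combination hx⟩
  -- Case i = 2, j = 1
  · have hx1 : x + 1 = (2 * k) * (3 * k + 1) := by
      have h : (x : ℤ) + 1 = (2 * (k : ℤ)) * (3 * (k : ℤ) + 1) := by linear_combination hx
      exact_mod_cast h
    constructor
    · rintro ⟨l1, l2, l3, hrep⟩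
      have hne : (l1 + l2 + 2 * l3) * (3 * k + 1) + (l2 + 3 * l3 + 1) = (2 * k) * (3 * k + 1) := by
        rw [← hx1, hrep]; ring
      obtain ⟨he, hn⟩ := key14 (3 * k + 1) _ _ (2 * k) (by omega) hne
      omega
    · apply closed14
      · exact ⟨0, 0, k, by zify; linear_combination hx⟩
      · exact ⟨2 * k + 1, 0, 0, by zify; linear_combination hx⟩
      · exact ⟨2 * k, 2, 0, by zify; linear_combination hx⟩
  -- Case i = 2, j = 2
  · have hx1 : x + 1 = (2 * k + 1) * (3 * k + 2) := by
      have h : (x : ℤ) + 1 = (2 * (k : ℤ) + 1) * (3 * (k : ℤ) + 2) := by linear_combination hx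
      exact_mod_cast h
    constructor
    · rintro ⟨l1, l2, l3, hrep⟩
      have hne : (l1 + l2 + 2 * l3) * (3 * k + 2) + (l2 + 3 * l3 + 1) = (2 * k + 1) * (3 * k + 2) := by
        rw [← hx1, hrep]; ring
      obtain ⟨he, hn⟩ := key14 (3 * k + 2) _ _ (2 * k + 1) (by omega) hne
      omega
    · apply closed14
      · exact ⟨0, 1, k, by zify; linear_combination hx⟩
      · exact ⟨2 * k + 2, 0, 0, by zify; linear_combination hx⟩
      · exact ⟨2 * k + 1, 2, 0, by zify; linear_combination hx⟩
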